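/- Let α ∈ ℝ and N ≥ 1. There exists x : (Fin N → Fin 3) → ℝ with all entries nonnegative, x ≠ 0, and A_α^{⊗N} x = 0, if and only if there exists a real vector y indexed by the triples (N0,N1,N2) of nonnegative integers with N0+N1+N2 = N, with all entries nonnegative and y ≠ 0, such that C_{α,N} y = 0. -/

import Mathlib

open Complex Finset

/-- The matrix `A_α` with rows `(1, e^{iα}, 0)` and `(0, 1, e^{iα})`. -/
noncomputable def Amat (α : ℝ) : Matrix (Fin 2) (Fin 3) ℂ :=
  !![1, Complex.exp (α * Complex.I), 0;
     0, 1, Complex.exp (α * Complex.I)]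

/-- Triples `(N0, N1, N2)` of nonnegative integers with `N0 + N1 + N2 = N`. -/
def Triple (N : ℕ) : Type := {t : ℕ × ℕ × ℕ // t.1 + t.2.1 + t.2.2 = N}

noncomputable instance (N : ℕ) : Fintype (Triple N) :=
  Fintype.ofInjective
    (fun t : Triple N =>
      ((⟨t.1.1, by have := t.2; omega⟩ : Fin (N + 1)),
       (⟨t.1.2.1, by have := t.2; omega⟩ : Fin (N + 1)),
       (⟨t.1.2.2, by have := t.2; omega⟩ : Fin (N + 1))))
    (by
      rintro ⟨⟨a, b, c⟩, h⟩ ⟨⟨a', b', c'⟩, h'⟩ heq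
      simp only [Prod.mk.injEq, Fin.mk.injEq] at heq
      exact Subtype.ext (by simp only [Prod.mk.injEq]; exact ⟨heq.1, heq.2.1, heq.2.2⟩))

/-- The entries of the reduced matrix `C_{α,N}`. -/
noncomputable def Cmat (α : ℝ) (N : ℕ) (j : Fin (N + 1)) (t : Triple N) : ℂ :=
  if t.1.1 ≤ N - (j : ℕ) ∧ t.1.2.1 ≤ (j : ℕ) then
    ((N - (j : ℕ)).choose t.1.1 : ℂ) *
      (-Complex.exp (α * Complex.I) ^ 2) ^ (N - (j : ℕ) - t.1.1) *
      ((j : ℕ).choose t.1.2.1 : ℂ) *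
      Complex.exp (α * Complex.I) ^ ((j : ℕ) - t.1.2.1)
  else 0


section aux

instance (N : ℕ) : DecidableEq (Triple N) :=
  inferInstanceAs (DecidableEq {t : ℕ × ℕ × ℕ // t.1 + t.2.1 + t.2.2 = N})

lemma Triple.ext' {N : ℕ} {s t : Triple N} (h : s.1 = t.1) : s = t := Subtype.ext h

variable {N : ℕ}

def cnt (i : Fin 3) (L : Fin N → Fin 3) : ℕ := (univ.filter fun p => L p = i).card

lemma cnt_sum (L : Fin N → Fin 3) : cnt 0 L + cnt 1 L + cnt 2 L = N := by
  have h := Finset.sum_fiberwise (univ : Finset (Fin N)) L (fun _ => (1 : ℕ))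
  simp only [Finset.sum_const, smul_eq_mul, mul_one, Finset.card_univ, Fintype.card_fin] at h
  rw [Fin.sum_univ_three] at h
  exact h

def cntT (L : Fin N → Fin 3) : Triple N := ⟨(cnt 0 L, cnt 1 L, cnt 2 L), cnt_sum L⟩

def cntJ (i : Fin 2) (J : Fin N → Fin 2) : ℕ := (univ.filter fun p => J p = i).card

lemma cntJ_sum (J : Fin N → Fin 2) : cntJ 0 J + cntJ 1 J = N := by
  have h := Finset.sum_fiberwise (univ : Finset (Fin N)) J (fun _ => (1 : ℕ))
  simp only [Finset.sum_const, smul_eq_mul, mul_one, Finset.card_univ, Fintype.card_fin] at h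
  rw [Fin.sum_univ_two] at h
  exact h

lemma cntJ_le (J : Fin N → Fin 2) (i : Fin 2) : cntJ i J ≤ N :=
  (Finset.card_filter_le _ _).trans_eq (by simp)

lemma prod_comp_L (L : Fin N → Fin 3) (h : Fin 3 → ℂ) :
    ∏ p, h (L p) = h 0 ^ cnt 0 L * h 1 ^ cnt 1 L * h 2 ^ cnt 2 L := by
  rw [← Finset.prod_fiberwise (univ : Finset (Fin N)) L (fun p => h (L p)), Fin.prod_univ_three]
  have key : ∀ i : Fin 3, ∏ p ∈ univ.filter fun p => L p = i, h (L p) = h i ^ cnt i L := by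
    intro i
    rw [cnt, ← Finset.prod_const]
    exact Finset.prod_congr rfl fun p hp => by rw [(Finset.mem_filter.1 hp).2]
  rw [key 0, key 1, key 2]

lemma prod_comp_J (J : Fin N → Fin 2) (h : Fin 2 → ℂ) :
    ∏ p, h (J p) = h 0 ^ cntJ 0 J * h 1 ^ cntJ 1 J := by
  rw [← Finset.prod_fiberwise (univ : Finset (Fin N)) J (fun p => h (J p)), Fin.prod_univ_two]
  have key : ∀ i : Fin 2, ∏ p ∈ univ.filter fun p => J p = i, h (J p) = h i ^ cntJ i J := by
    intro i
    rw [cntJ, ← Finset.prod_const]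
    exact Finset.prod_congr rfl fun p hp => by rw [(Finset.mem_filter.1 hp).2]
  rw [key 0, key 1]


section keysum
variable {R : Type*} [CommRing R]

lemma key_sum (n M : ℕ) : ∀ j : ℕ,
    ∑ k ∈ Finset.range (M + 1), (-1 : R) ^ k * (M.choose k : R) * ((j + k).choose n : R)
      = (-1) ^ M * (if M ≤ n then ((j.choose (n - M) : ℕ) : R) else 0) := by
  induction M with
  | zero => intro j; simp
  | succ M ih =>
    intro j
    have h1 : ∑ k ∈ Finset.range (M + 1 + 1), (-1 : R) ^ k * ((M + 1).choose k : R) * ((j + k).choose n : R)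
        = (∑ i ∈ Finset.range (M + 1), (-1 : R) ^ (i + 1) * ((M + 1).choose (i + 1) : R) * ((j + (i + 1)).choose n : R))
          + (-1 : R) ^ 0 * ((M + 1).choose 0 : R) * ((j + 0).choose n : R) := Finset.sum_range_succ' _ _
    have h2 : ∑ k ∈ Finset.range (M + 1 + 1), (-1 : R) ^ k * (M.choose k : R) * ((j + k).choose n : R)
        = (∑ i ∈ Finset.range (M + 1), (-1 : R) ^ (i + 1) * (M.choose (i + 1) : R) * ((j + (i + 1)).choose n : R))
          + (-1 : R) ^ 0 * (M.choose 0 : R) * ((j + 0).choose n : R) := Finset.sum_range_succ' _ _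
    have h3 : ∑ k ∈ Finset.range (M + 1 + 1), (-1 : R) ^ k * (M.choose k : R) * ((j + k).choose n : R)
        = ∑ k ∈ Finset.range (M + 1), (-1 : R) ^ k * (M.choose k : R) * ((j + k).choose n : R) := by
      rw [Finset.sum_range_succ, Nat.choose_succ_self]; simp
    have split : ∀ i : ℕ, (-1 : R) ^ (i + 1) * ((M + 1).choose (i + 1) : R) * ((j + (i + 1)).choose n : R)
        = (-1 : R) ^ (i + 1) * (M.choose (i + 1) : R) * ((j + (i + 1)).choose n : R)
          + (-((-1 : R) ^ i * (M.choose i : R) * ((j + 1 + i).choose n : R))) := by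
      intro i
      have hp : ((M + 1).choose (i + 1) : R) = (M.choose i : R) + (M.choose (i + 1) : R) := by
        rw [Nat.choose_succ_succ]; push_cast; ring
      rw [hp]
      have hj : j + (i + 1) = j + 1 + i := by omega
      rw [hj]; ring
    calc ∑ k ∈ Finset.range (M + 1 + 1), (-1 : R) ^ k * ((M + 1).choose k : R) * ((j + k).choose n : R)
        = (∑ i ∈ Finset.range (M + 1), ((-1 : R) ^ (i + 1) * (M.choose (i + 1) : R) * ((j + (i + 1)).choose n : R)
            + (-((-1 : R) ^ i * (M.choose i : R) * ((j + 1 + i).choose n : R)))))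
          + (-1 : R) ^ 0 * ((M + 1).choose 0 : R) * ((j + 0).choose n : R) := by
          rw [h1]; congr 1; exact Finset.sum_congr rfl fun i _ => split i
      _ = (∑ k ∈ Finset.range (M + 1), (-1 : R) ^ k * (M.choose k : R) * ((j + k).choose n : R))
          - ∑ i ∈ Finset.range (M + 1), (-1 : R) ^ i * (M.choose i : R) * ((j + 1 + i).choose n : R) := by
          rw [Finset.sum_add_distrib, Finset.sum_neg_distrib, ← h3, h2]
          simp [Nat.choose_zero_right]
          ring
      _ = (-1) ^ M * (if M ≤ n then ((j.choose (n - M) : ℕ) : R) else 0)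
          - (-1) ^ M * (if M ≤ n then (((j + 1).choose (n - M) : ℕ) : R) else 0) := by
          rw [ih j, ih (j + 1)]
      _ = (-1) ^ (M + 1) * (if M + 1 ≤ n then ((j.choose (n - (M + 1)) : ℕ) : R) else 0) := by
          by_cases hMn : M + 1 ≤ n
          · have hM : M ≤ n := by omega
            simp only [hMn, hM, if_true]
            have hs : n - M = (n - (M + 1)) + 1 := by omega
            rw [hs]
            have hp : (((j + 1).choose (n - (M + 1) + 1) : ℕ) : R)
                = ((j.choose (n - (M + 1)) : ℕ) : R) + ((j.choose (n - (M + 1) + 1) : ℕ) : R) := by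
              rw [Nat.choose_succ_succ]; push_cast; ring
            rw [hp]; ring
          · by_cases hM : M ≤ n
            · have hMn' : M = n := by omega
              subst hMn'
              simp [hMn, hM]
            · simp [hM, hMn]
end keysum

lemma choose_aux (a m k : ℕ) (hk : k ≤ m) :
    (a + m).choose k * (a + (m - k)).choose a = (a + m).choose a * m.choose k := by
  have hpos : 0 < k.factorial * ((m - k).factorial * a.factorial) :=
    Nat.mul_pos k.factorial_pos (Nat.mul_pos (m - k).factorial_pos a.factorial_pos)
  apply Nat.eq_of_mul_eq_mul_right hpos
  have e1 : (a + (m - k)).choose a * a.factorial * (m - k).factorial = (a + (m - k)).factorial := by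
    have := Nat.choose_mul_factorial_mul_factorial (Nat.le_add_right a (m - k))
    simpa [Nat.add_sub_cancel_left] using this
  have e2 : (a + m).choose k * k.factorial * (a + (m - k)).factorial = (a + m).factorial := by
    have hk' : k ≤ a + m := by omega
    have := Nat.choose_mul_factorial_mul_factorial hk'
    have hh : a + m - k = a + (m - k) := by omega
    rwa [hh] at this
  have e3 : (a + m).choose a * a.factorial * m.factorial = (a + m).factorial := by
    have := Nat.choose_mul_factorial_mul_factorial (Nat.le_add_right a m)
    simpa [Nat.add_sub_cancel_left] using this
  have e4 : m.choose k * k.factorial * (m - k).factorial = m.factorial :=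
    Nat.choose_mul_factorial_mul_factorial hk
  calc (a + m).choose k * (a + (m - k)).choose a * (k.factorial * ((m - k).factorial * a.factorial))
      = ((a + m).choose k * k.factorial) * ((a + (m - k)).choose a * a.factorial * (m - k).factorial) := by ring
    _ = ((a + m).choose k * k.factorial) * (a + (m - k)).factorial := by rw [e1]
    _ = (a + m).factorial := by rw [← e2]
    _ = (a + m).choose a * a.factorial * m.factorial := by rw [e3]
    _ = ((a + m).choose a * m.choose k) * (k.factorial * ((m - k).factorial * a.factorial)) := by
        rw [← e4]; ring

noncomputable def Bent (z : ℂ) (N j N0 N1 : ℕ) : ℂ :=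
  ((N - j).choose N0 : ℂ) * z ^ (N - j - N0) *
    (if N - j - N0 ≤ N1 then ((j.choose (N1 - (N - j - N0)) : ℕ) : ℂ) * z ^ (j - (N1 - (N - j - N0))) else 0)

noncomputable def Cent (z : ℂ) (N j N0 N1 : ℕ) : ℂ :=
  ((N - j).choose N0 : ℂ) * (-z ^ 2) ^ (N - j - N0) * ((j.choose N1 : ℕ) : ℂ) * z ^ (j - N1)

noncomputable def Dent (z : ℂ) (j N1 N2 : ℕ) : ℂ :=
  if N2 ≤ j then z ^ N2 * (z ^ (N1 - (j - N2)) * ((N1.choose (j - N2) : ℕ) : ℂ)) else 0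

lemma R1 (z : ℂ) (N j N0 N1 N2 : ℕ) (hN : N0 + N1 + N2 = N) (hj : j ≤ N) :
    ((N0.factorial * N1.factorial * N2.factorial : ℕ) : ℂ) * Bent z N j N0 N1
      = ((j.factorial * (N - j).factorial : ℕ) : ℂ) * Dent z j N1 N2 := by
  by_cases hc : j ≤ N1 + N2
  · set M := N1 + N2 - j with hM
    have hNj : N - j = N0 + M := by omega
    have hNjN0 : N - j - N0 = M := by omega
    by_cases h2 : N2 ≤ j
    · have hMN1 : M ≤ N1 := by omega
      rw [Bent, Dent, hNjN0, if_pos hMN1, if_pos h2]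
      have e1 : N1 - M = j - N2 := by omega
      have e2 : j - (j - N2) = N2 := by omega
      have e3 : N1 - (j - N2) = M := by omega
      rw [e1, e2, e3, hNj]
      have nat_id : N0.factorial * N1.factorial * N2.factorial * ((N0 + M).choose N0 * j.choose (j - N2))
          = j.factorial * (N0 + M).factorial * N1.choose (j - N2) := by
        have hcs : j.choose (j - N2) = j.choose N2 := Nat.choose_symm h2
        rw [hcs]
        have hpos : 0 < M.factorial * (j - N2).factorial :=
          Nat.mul_pos M.factorial_pos (j - N2).factorial_pos
        apply Nat.eq_of_mul_eq_mul_right hpos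
        have c1 : (N0 + M).choose N0 * N0.factorial * M.factorial = (N0 + M).factorial := by
          have := Nat.choose_mul_factorial_mul_factorial (Nat.le_add_right N0 M)
          simpa [Nat.add_sub_cancel_left] using this
        have c2 : j.choose N2 * N2.factorial * (j - N2).factorial = j.factorial :=
          Nat.choose_mul_factorial_mul_factorial h2
        have c3 : N1.choose (j - N2) * (j - N2).factorial * M.factorial = N1.factorial := by
          have hle : j - N2 ≤ N1 := by omega
          have := Nat.choose_mul_factorial_mul_factorial hle
          have hh : N1 - (j - N2) = M := by omega
          rw [hh] at this
          linarith [this]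
        calc N0.factorial * N1.factorial * N2.factorial * ((N0 + M).choose N0 * j.choose N2) * (M.factorial * (j - N2).factorial)
            = N1.factorial * ((N0 + M).choose N0 * N0.factorial * M.factorial) * (j.choose N2 * N2.factorial * (j - N2).factorial) := by ring
          _ = N1.factorial * (N0 + M).factorial * j.factorial := by rw [c1, c2]
          _ = j.factorial * (N0 + M).factorial * (N1.choose (j - N2) * (j - N2).factorial * M.factorial) := by rw [c3]; ring
          _ = j.factorial * (N0 + M).factorial * N1.choose (j - N2) * (M.factorial * (j - N2).factorial) := by ring
      have cast_id : ((N0.factorial * N1.factorial * N2.factorial * ((N0 + M).choose N0 * j.choose (j - N2)) : ℕ) : ℂ)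
          = ((j.factorial * (N0 + M).factorial * N1.choose (j - N2) : ℕ) : ℂ) := by
        exact_mod_cast congrArg (Nat.cast : ℕ → ℂ) nat_id
      push_cast at cast_id ⊢
      linear_combination (z ^ M * z ^ N2) * cast_id
    · have hMN1 : ¬ (M ≤ N1) := by omega
      rw [Bent, Dent, hNjN0, if_neg hMN1, if_neg h2]
      ring
  · have h1 : N - j < N0 := by omega
    have hD : Dent z j N1 N2 = 0 := by
      rw [Dent]
      split
      · rw [Nat.choose_eq_zero_of_lt (by omega : N1 < j - N2)]
        simp
      · rfl
    rw [Bent, Nat.choose_eq_zero_of_lt h1, hD]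
    simp


lemma R2' (z : ℂ) (N j N0 N1 N2 : ℕ) (hN : N0 + N1 + N2 = N) (hj : j ≤ N) :
    Bent z N j N0 N1
      = ∑ k ∈ Finset.range (N - j + 1), ((N - j).choose k : ℂ) * z ^ k * Cent z N (j + k) N0 N1 := by
  by_cases hc : j ≤ N1 + N2
  case neg =>
    have h1 : N - j < N0 := by omega
    rw [Bent, Nat.choose_eq_zero_of_lt h1]
    rw [Finset.sum_eq_zero]
    · simp
    · intro k hk
      rw [Cent, Nat.choose_eq_zero_of_lt (show N - (j + k) < N0 by omega)]
      push_cast; ring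
  case pos =>
    set M := N1 + N2 - j with hM
    have hNj : N - j = N0 + M := by omega
    have hNjN0 : N - j - N0 = M := by omega
    have trunc : ∑ k ∈ Finset.range (N - j + 1), ((N - j).choose k : ℂ) * z ^ k * Cent z N (j + k) N0 N1
        = ∑ k ∈ Finset.range (M + 1), ((N - j).choose k : ℂ) * z ^ k * Cent z N (j + k) N0 N1 := by
      symm
      apply Finset.sum_subset
      · exact Finset.range_subset_range.2 (by omega)
      · intro k hk1 hk2
        simp only [Finset.mem_range] at hk1 hk2
        rw [Cent, Nat.choose_eq_zero_of_lt (show N - (j + k) < N0 by omega)]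
        push_cast; ring
    have term_eq : ∀ k ∈ Finset.range (M + 1),
        ((N - j).choose k : ℂ) * z ^ k * Cent z N (j + k) N0 N1
          = ((N - j).choose N0 : ℂ) * z ^ (2 * M + j - N1) * (-1 : ℂ) ^ M *
            ((-1 : ℂ) ^ k * (M.choose k : ℂ) * (((j + k).choose N1 : ℕ) : ℂ)) := by
      intro k hk
      simp only [Finset.mem_range] at hk
      have hkM : k ≤ M := by omega
      have h1 : N - (j + k) = N0 + (M - k) := by omega
      rw [Cent, h1, Nat.add_sub_cancel_left]
      have hch : ((N - j).choose k : ℂ) * ((N0 + (M - k)).choose N0 : ℂ)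
          = ((N - j).choose N0 : ℂ) * (M.choose k : ℂ) := by
        have h := choose_aux N0 M k hkM
        rw [hNj]
        exact_mod_cast congrArg (Nat.cast : ℕ → ℂ) h
      have hsgn : (-z ^ 2 : ℂ) ^ (M - k) = (-1) ^ (M - k) * z ^ (2 * (M - k)) := by
        rw [neg_pow, ← pow_mul]
      have hsgn2 : ((-1 : ℂ)) ^ (M - k) = (-1) ^ M * (-1) ^ k := by
        have hmk : M - k + (k + k) = M + k := by omega
        calc ((-1 : ℂ)) ^ (M - k) = (-1) ^ (M - k) * ((-1) ^ k * (-1) ^ k) := by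
              rw [← mul_pow]; simp
          _ = (-1) ^ (M - k + (k + k)) := by rw [pow_add, pow_add]
          _ = (-1) ^ (M + k) := by rw [hmk]
          _ = (-1) ^ M * (-1) ^ k := pow_add _ _ _
      by_cases hN1 : N1 ≤ j + k
      · have hz : z ^ k * z ^ (2 * (M - k)) * z ^ (j + k - N1) = z ^ (2 * M + j - N1) := by
          rw [← pow_add, ← pow_add]
          congr 1
          omega
        calc ((N - j).choose k : ℂ) * z ^ k *
              (((N0 + (M - k)).choose N0 : ℂ) * (-z ^ 2) ^ (M - k) * (((j + k).choose N1 : ℕ) : ℂ) * z ^ (j + k - N1))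
            = (((N - j).choose k : ℂ) * ((N0 + (M - k)).choose N0 : ℂ)) * ((-1) ^ M * (-1) ^ k) *
              (((j + k).choose N1 : ℕ) : ℂ) * (z ^ k * z ^ (2 * (M - k)) * z ^ (j + k - N1)) := by
              rw [hsgn, hsgn2]; ring
          _ = (((N - j).choose N0 : ℂ) * (M.choose k : ℂ)) * ((-1) ^ M * (-1) ^ k) *
              (((j + k).choose N1 : ℕ) : ℂ) * z ^ (2 * M + j - N1) := by rw [hch, hz]
          _ = _ := by ring
      · rw [Nat.choose_eq_zero_of_lt (by omega : j + k < N1)]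
        push_cast; ring
    rw [trunc, Finset.sum_congr rfl term_eq, ← Finset.mul_sum]
    rw [key_sum (R := ℂ) N1 M j, Bent, hNjN0]
    by_cases hMN1 : M ≤ N1
    · rw [if_pos hMN1, if_pos hMN1]
      have hzz : z ^ (2 * M + j - N1) = z ^ M * z ^ (j - (N1 - M)) := by
        rw [← pow_add]; congr 1; omega
      have hsq : ((-1 : ℂ)) ^ M * (-1) ^ M = 1 := by rw [← mul_pow]; simp
      rw [hzz]
      linear_combination (-(((N - j).choose N0 : ℂ) * (z ^ M * z ^ (j - (N1 - M))) * ((j.choose (N1 - M) : ℕ) : ℂ))) * hsq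
    · rw [if_neg hMN1, if_neg hMN1]
      ring

lemma R2 (z : ℂ) (N j N0 N1 N2 : ℕ) (hN : N0 + N1 + N2 = N) (hj : j ≤ N) :
    Cent z N j N0 N1
      = ∑ k ∈ Finset.range (N - j + 1), ((N - j).choose k : ℂ) * (-z) ^ k * Bent z N (j + k) N0 N1 := by
  by_cases hc : j ≤ N1 + N2
  case neg =>
    have h1 : N - j < N0 := by omega
    rw [Cent, Nat.choose_eq_zero_of_lt h1]
    rw [Finset.sum_eq_zero]
    · simp
    · intro k hk
      rw [Bent, Nat.choose_eq_zero_of_lt (show N - (j + k) < N0 by omega)]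
      push_cast; ring
  case pos =>
    set M := N1 + N2 - j with hM
    have hNj : N - j = N0 + M := by omega
    have hNjN0 : N - j - N0 = M := by omega
    have trunc : ∑ k ∈ Finset.range (N - j + 1), ((N - j).choose k : ℂ) * (-z) ^ k * Bent z N (j + k) N0 N1
        = ∑ k ∈ Finset.range (M + 1), ((N - j).choose k : ℂ) * (-z) ^ k * Bent z N (j + k) N0 N1 := by
      symm
      apply Finset.sum_subset
      · exact Finset.range_subset_range.2 (by omega)
      · intro k hk1 hk2
        simp only [Finset.mem_range] at hk1 hk2
        rw [Bent, Nat.choose_eq_zero_of_lt (show N - (j + k) < N0 by omega)]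
        push_cast; ring
    have term_eq : ∀ k ∈ Finset.range (M + 1),
        ((N - j).choose k : ℂ) * (-z) ^ k * Bent z N (j + k) N0 N1
          = ((N - j).choose N0 : ℂ) * z ^ (M + N2) *
            ((-1 : ℂ) ^ k * (M.choose k : ℂ) * (((j + k).choose N2 : ℕ) : ℂ)) := by
      intro k hk
      simp only [Finset.mem_range] at hk
      have hkM : k ≤ M := by omega
      have h1 : N - (j + k) = N0 + (M - k) := by omega
      rw [Bent, h1, Nat.add_sub_cancel_left]
      have hch : ((N - j).choose k : ℂ) * ((N0 + (M - k)).choose N0 : ℂ)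
          = ((N - j).choose N0 : ℂ) * (M.choose k : ℂ) := by
        have h := choose_aux N0 M k hkM
        rw [hNj]
        exact_mod_cast congrArg (Nat.cast : ℕ → ℂ) h
      have hzk : (-z : ℂ) ^ k = (-1) ^ k * z ^ k := neg_pow z k
      by_cases hif : M - k ≤ N1
      · rw [if_pos hif]
        have ha : N1 - (M - k) + N2 = j + k := by omega
        have hsymm : (j + k).choose (N1 - (M - k)) = (j + k).choose N2 := by
          have h' : N1 - (M - k) ≤ j + k := by omega
          have := Nat.choose_symm h'
          rw [show j + k - (N1 - (M - k)) = N2 by omega] at this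
          rw [← this]
        have hexp : (j + k) - (N1 - (M - k)) = N2 := by omega
        rw [hsymm, hexp]
        have hz : z ^ k * z ^ (M - k) * z ^ N2 = z ^ (M + N2) := by
          rw [← pow_add, ← pow_add]
          congr 1
          omega
        calc ((N - j).choose k : ℂ) * (-z) ^ k *
              (((N0 + (M - k)).choose N0 : ℂ) * z ^ (M - k) * ((((j + k).choose N2 : ℕ) : ℂ) * z ^ N2))
            = (((N - j).choose k : ℂ) * ((N0 + (M - k)).choose N0 : ℂ)) * (-1) ^ k *
              (((j + k).choose N2 : ℕ) : ℂ) * (z ^ k * z ^ (M - k) * z ^ N2) := by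
              rw [hzk]; ring
          _ = (((N - j).choose N0 : ℂ) * (M.choose k : ℂ)) * (-1) ^ k *
              (((j + k).choose N2 : ℕ) : ℂ) * z ^ (M + N2) := by rw [hch, hz]
          _ = _ := by ring
      · rw [if_neg hif, Nat.choose_eq_zero_of_lt (by omega : j + k < N2)]
        push_cast; ring
    rw [trunc, Finset.sum_congr rfl term_eq, ← Finset.mul_sum]
    rw [key_sum (R := ℂ) N2 M j, Cent, hNjN0]
    by_cases hMN2 : M ≤ N2
    · rw [if_pos hMN2]
      have hN1j : N1 ≤ j := by omega
      have hsymm : j.choose (N2 - M) = j.choose N1 := by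
        have := Nat.choose_symm hN1j
        rw [show N2 - M = j - N1 by omega, this]
      rw [hsymm]
      have hneg : (-z ^ 2 : ℂ) ^ M = (-1) ^ M * z ^ (2 * M) := by
        rw [neg_pow, ← pow_mul]
      have hzz : z ^ (M + N2) = z ^ (2 * M) * z ^ (j - N1) := by
        rw [← pow_add]; congr 1; omega
      rw [hneg, hzz]
      ring
    · rw [if_neg hMN2, Nat.choose_eq_zero_of_lt (by omega : j < N1)]
      push_cast; ring

lemma cmat_eq (α : ℝ) (N : ℕ) (j : Fin (N + 1)) (t : Triple N) :
    Cmat α N j t = Cent (Complex.exp (α * Complex.I)) N j t.1.1 t.1.2.1 := by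
  simp only [Cmat, Cent]
  split
  · rfl
  · rename_i h
    push_neg at h
    by_cases h1 : t.1.1 ≤ N - (j : ℕ)
    · rw [Nat.choose_eq_zero_of_lt (h h1)]
      push_cast; ring
    · rw [Nat.choose_eq_zero_of_lt (by omega : N - (j : ℕ) < t.1.1)]
      push_cast; ring


lemma forward_extract (α : ℝ) (N : ℕ) (x : (Fin N → Fin 3) → ℝ)
    (hsys : ∀ J : Fin N → Fin 2,
      ∑ L : Fin N → Fin 3, (x L : ℂ) * ∏ p : Fin N, Amat α (J p) (L p) = 0) (j : ℕ) :
    ∑ L : Fin N → Fin 3,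
      (x L : ℂ) * Dent (Complex.exp (α * Complex.I)) j (cnt 1 L) (cnt 2 L) = 0 := by
  set z := Complex.exp (α * Complex.I) with hz
  have heval : ∀ s : ℂ,
      ∑ L : Fin N → Fin 3, (x L : ℂ) * ((z + s) ^ cnt 1 L * (s * z) ^ cnt 2 L) = 0 := by
    intro s
    have hent : ∀ ℓ : Fin 3,
        (![(1 : ℂ), z + s, s * z] : Fin 3 → ℂ) ℓ = ∑ i : Fin 2, (![(1 : ℂ), s] : Fin 2 → ℂ) i * Amat α i ℓ := by
      intro ℓ
      fin_cases ℓ <;> simp [Amat, Fin.sum_univ_two, hz] <;> ring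
    calc ∑ L : Fin N → Fin 3, (x L : ℂ) * ((z + s) ^ cnt 1 L * (s * z) ^ cnt 2 L)
        = ∑ L : Fin N → Fin 3, (x L : ℂ) * ∏ p, (![(1 : ℂ), z + s, s * z] : Fin 3 → ℂ) (L p) := by
          refine Finset.sum_congr rfl fun L _ => ?_
          rw [prod_comp_L]
          simp
      _ = ∑ L : Fin N → Fin 3, (x L : ℂ) *
            ∑ J : Fin N → Fin 2, ∏ p, ((![(1 : ℂ), s] : Fin 2 → ℂ) (J p) * Amat α (J p) (L p)) := by
          refine Finset.sum_congr rfl fun L _ => ?_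
          congr 1
          rw [← Fintype.prod_sum (fun p (i : Fin 2) => (![(1 : ℂ), s] : Fin 2 → ℂ) i * Amat α i (L p))]
          exact Finset.prod_congr rfl fun p _ => hent (L p)
      _ = ∑ J : Fin N → Fin 2, (∏ p, (![(1 : ℂ), s] : Fin 2 → ℂ) (J p)) *
            ∑ L : Fin N → Fin 3, (x L : ℂ) * ∏ p, Amat α (J p) (L p) := by
          simp only [Finset.mul_sum]
          rw [Finset.sum_comm]
          refine Finset.sum_congr rfl fun J _ => Finset.sum_congr rfl fun L _ => ?_
          rw [Finset.prod_mul_distrib]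
          ring
      _ = 0 := by
          rw [Finset.sum_eq_zero]
          intro J _
          rw [hsys J, mul_zero]
  set P : Polynomial ℂ := ∑ L : Fin N → Fin 3,
    Polynomial.C ((x L : ℂ) * z ^ cnt 2 L) * (Polynomial.X + Polynomial.C z) ^ cnt 1 L
      * Polynomial.X ^ cnt 2 L with hPdef
  have hP0 : P = 0 := by
    apply Polynomial.funext
    intro s
    rw [Polynomial.eval_zero, hPdef, Polynomial.eval_finset_sum]
    calc ∑ L : Fin N → Fin 3, Polynomial.eval s
          (Polynomial.C ((x L : ℂ) * z ^ cnt 2 L) * (Polynomial.X + Polynomial.C z) ^ cnt 1 L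
            * Polynomial.X ^ cnt 2 L)
        = ∑ L : Fin N → Fin 3, (x L : ℂ) * ((z + s) ^ cnt 1 L * (s * z) ^ cnt 2 L) := by
          refine Finset.sum_congr rfl fun L _ => ?_
          simp only [Polynomial.eval_mul, Polynomial.eval_pow, Polynomial.eval_add,
            Polynomial.eval_C, Polynomial.eval_X]
          ring
      _ = 0 := heval s
  have hc := congrArg (fun p : Polynomial ℂ => p.coeff j) hP0
  simp only [Polynomial.coeff_zero] at hc
  rw [hPdef, Polynomial.finset_sum_coeff] at hc
  calc ∑ L : Fin N → Fin 3, (x L : ℂ) * Dent z j (cnt 1 L) (cnt 2 L)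
      = ∑ L : Fin N → Fin 3,
          (Polynomial.C ((x L : ℂ) * z ^ cnt 2 L) * (Polynomial.X + Polynomial.C z) ^ cnt 1 L
            * Polynomial.X ^ cnt 2 L).coeff j := by
        refine Finset.sum_congr rfl fun L _ => ?_
        rw [Polynomial.coeff_mul_X_pow', Polynomial.coeff_C_mul, Polynomial.coeff_X_add_C_pow,
          Dent]
        split_ifs
        · ring
        · rw [mul_zero]
    _ = 0 := hc

lemma backward_b2 (α : ℝ) (N : ℕ) (J : Fin N → Fin 2) (N0 N1 : ℕ) :
    ∑ L : Fin N → Fin 3, (if cnt 0 L = N0 ∧ cnt 1 L = N1 then ∏ p, Amat α (J p) (L p) else 0)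
      = Bent (Complex.exp (α * Complex.I)) N (cntJ 1 J) N0 N1 := by
  set z := Complex.exp (α * Complex.I) with hz
  set j := cntJ 1 J with hjdef
  have hj0 : cntJ 0 J = N - j := by have := cntJ_sum J; omega
  have heval2 : ∀ a b : ℂ,
      ∑ L : Fin N → Fin 3, (∏ p, Amat α (J p) (L p)) * (a ^ cnt 0 L * b ^ cnt 1 L)
        = (a + z * b) ^ (N - j) * (b + z) ^ j := by
    intro a b
    have hent2 : ∀ i : Fin 2,
        (![a + z * b, b + z] : Fin 2 → ℂ) i
          = ∑ ℓ : Fin 3, Amat α i ℓ * (![a, b, 1] : Fin 3 → ℂ) ℓ := by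
      intro i
      fin_cases i <;> simp [Amat, Fin.sum_univ_three, hz] <;> ring
    calc ∑ L : Fin N → Fin 3, (∏ p, Amat α (J p) (L p)) * (a ^ cnt 0 L * b ^ cnt 1 L)
        = ∑ L : Fin N → Fin 3, ∏ p, (Amat α (J p) (L p) * (![a, b, 1] : Fin 3 → ℂ) (L p)) := by
          refine Finset.sum_congr rfl fun L _ => ?_
          rw [Finset.prod_mul_distrib]
          congr 1
          rw [prod_comp_L]
          simp
      _ = ∏ p, ∑ ℓ : Fin 3, Amat α (J p) ℓ * (![a, b, 1] : Fin 3 → ℂ) ℓ :=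
          (Fintype.prod_sum (fun p (ℓ : Fin 3) => Amat α (J p) ℓ * (![a, b, 1] : Fin 3 → ℂ) ℓ)).symm
      _ = ∏ p, (![a + z * b, b + z] : Fin 2 → ℂ) (J p) :=
          Finset.prod_congr rfl fun p _ => (hent2 (J p)).symm
      _ = (a + z * b) ^ (N - j) * (b + z) ^ j := by
          rw [prod_comp_J, hj0, ← hjdef]
          simp
  have b1 : ∀ b : ℂ,
      ∑ L : Fin N → Fin 3, (if cnt 0 L = N0 then (∏ p, Amat α (J p) (L p)) * b ^ cnt 1 L else 0)
        = (z * b) ^ (N - j - N0) * ((N - j).choose N0 : ℂ) * (b + z) ^ j := by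
    intro b
    set P1 : Polynomial ℂ := ∑ L : Fin N → Fin 3,
      Polynomial.C ((∏ p, Amat α (J p) (L p)) * b ^ cnt 1 L) * Polynomial.X ^ cnt 0 L with hP1
    set Q1 : Polynomial ℂ :=
      (Polynomial.X + Polynomial.C (z * b)) ^ (N - j) * Polynomial.C ((b + z) ^ j) with hQ1
    have hPQ : P1 = Q1 := by
      apply Polynomial.funext
      intro a
      rw [hP1, hQ1, Polynomial.eval_finset_sum]
      calc ∑ L : Fin N → Fin 3, Polynomial.eval a
            (Polynomial.C ((∏ p, Amat α (J p) (L p)) * b ^ cnt 1 L) * Polynomial.X ^ cnt 0 L)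
          = ∑ L : Fin N → Fin 3, (∏ p, Amat α (J p) (L p)) * (a ^ cnt 0 L * b ^ cnt 1 L) := by
            refine Finset.sum_congr rfl fun L _ => ?_
            simp only [Polynomial.eval_mul, Polynomial.eval_pow, Polynomial.eval_C,
              Polynomial.eval_X]
            ring
        _ = (a + z * b) ^ (N - j) * (b + z) ^ j := heval2 a b
        _ = Polynomial.eval a ((Polynomial.X + Polynomial.C (z * b)) ^ (N - j)
              * Polynomial.C ((b + z) ^ j)) := by
            simp only [Polynomial.eval_mul, Polynomial.eval_pow, Polynomial.eval_add,
              Polynomial.eval_C, Polynomial.eval_X]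
    have hcoe := congrArg (fun p : Polynomial ℂ => p.coeff N0) hPQ
    simp only [hP1, hQ1, Polynomial.finset_sum_coeff] at hcoe
    calc ∑ L : Fin N → Fin 3, (if cnt 0 L = N0 then (∏ p, Amat α (J p) (L p)) * b ^ cnt 1 L else 0)
        = ∑ L : Fin N → Fin 3,
            (Polynomial.C ((∏ p, Amat α (J p) (L p)) * b ^ cnt 1 L)
              * Polynomial.X ^ cnt 0 L).coeff N0 := by
          refine Finset.sum_congr rfl fun L _ => ?_
          rw [Polynomial.coeff_C_mul, Polynomial.coeff_X_pow]
          by_cases hL : cnt 0 L = N0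
          · rw [if_pos hL, if_pos hL.symm, mul_one]
          · rw [if_neg hL, if_neg (Ne.symm hL), mul_zero]
      _ = ((Polynomial.X + Polynomial.C (z * b)) ^ (N - j)
            * Polynomial.C ((b + z) ^ j)).coeff N0 := hcoe
      _ = (z * b) ^ (N - j - N0) * ((N - j).choose N0 : ℂ) * (b + z) ^ j := by
          rw [Polynomial.coeff_mul_C, Polynomial.coeff_X_add_C_pow]
  set P2 : Polynomial ℂ := ∑ L : Fin N → Fin 3,
    (if cnt 0 L = N0 then Polynomial.C (∏ p, Amat α (J p) (L p)) * Polynomial.X ^ cnt 1 L else 0)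
    with hP2
  set Q2 : Polynomial ℂ :=
    Polynomial.C (((N - j).choose N0 : ℂ) * z ^ (N - j - N0))
      * (Polynomial.X ^ (N - j - N0) * (Polynomial.X + Polynomial.C z) ^ j) with hQ2
  have hPQ2 : P2 = Q2 := by
    apply Polynomial.funext
    intro b
    rw [hP2, hQ2, Polynomial.eval_finset_sum]
    calc ∑ L : Fin N → Fin 3, Polynomial.eval b
          (if cnt 0 L = N0 then Polynomial.C (∏ p, Amat α (J p) (L p)) * Polynomial.X ^ cnt 1 L else 0)
        = ∑ L : Fin N → Fin 3,
            (if cnt 0 L = N0 then (∏ p, Amat α (J p) (L p)) * b ^ cnt 1 L else 0) := by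
          refine Finset.sum_congr rfl fun L _ => ?_
          rw [apply_ite (Polynomial.eval b)]
          simp only [Polynomial.eval_mul, Polynomial.eval_pow, Polynomial.eval_C,
            Polynomial.eval_X, Polynomial.eval_zero]
      _ = (z * b) ^ (N - j - N0) * ((N - j).choose N0 : ℂ) * (b + z) ^ j := b1 b
      _ = Polynomial.eval b (Polynomial.C (((N - j).choose N0 : ℂ) * z ^ (N - j - N0))
            * (Polynomial.X ^ (N - j - N0) * (Polynomial.X + Polynomial.C z) ^ j)) := by
          simp only [Polynomial.eval_mul, Polynomial.eval_pow, Polynomial.eval_add,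
            Polynomial.eval_C, Polynomial.eval_X]
          rw [mul_pow]
          ring
  have hcoe2 := congrArg (fun p : Polynomial ℂ => p.coeff N1) hPQ2
  simp only [hP2, hQ2, Polynomial.finset_sum_coeff] at hcoe2
  calc ∑ L : Fin N → Fin 3, (if cnt 0 L = N0 ∧ cnt 1 L = N1 then ∏ p, Amat α (J p) (L p) else 0)
      = ∑ L : Fin N → Fin 3,
          (if cnt 0 L = N0 then Polynomial.C (∏ p, Amat α (J p) (L p))
            * Polynomial.X ^ cnt 1 L else 0).coeff N1 := by
        refine Finset.sum_congr rfl fun L _ => ?_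
        rw [apply_ite (fun p : Polynomial ℂ => p.coeff N1), Polynomial.coeff_zero,
          Polynomial.coeff_C_mul, Polynomial.coeff_X_pow]
        by_cases h0 : cnt 0 L = N0
        · by_cases h1 : cnt 1 L = N1
          · rw [if_pos ⟨h0, h1⟩, if_pos h0, if_pos h1.symm, mul_one]
          · rw [if_neg (by tauto), if_pos h0, if_neg (Ne.symm h1), mul_zero]
        · rw [if_neg (by tauto), if_neg h0]
    _ = (Polynomial.C (((N - j).choose N0 : ℂ) * z ^ (N - j - N0))
          * (Polynomial.X ^ (N - j - N0) * (Polynomial.X + Polynomial.C z) ^ j)).coeff N1 := hcoe2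
    _ = Bent z N j N0 N1 := by
        rw [Polynomial.coeff_C_mul, mul_comm (Polynomial.X ^ (N - j - N0))
          ((Polynomial.X + Polynomial.C z) ^ j), Polynomial.coeff_mul_X_pow',
          Bent]
        split_ifs with h
        · rw [Polynomial.coeff_X_add_C_pow]
          ring
        · simp

lemma backward_b3 (α : ℝ) (N : ℕ) (J : Fin N → Fin 2) (g : Triple N → ℂ) :
    ∑ L : Fin N → Fin 3, g (cntT L) * ∏ p, Amat α (J p) (L p)
      = ∑ t : Triple N, g t * Bent (Complex.exp (α * Complex.I)) N (cntJ 1 J) t.1.1 t.1.2.1 := by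
  have hre : ∀ t : Triple N,
      g t * Bent (Complex.exp (α * Complex.I)) N (cntJ 1 J) t.1.1 t.1.2.1
        = ∑ L : Fin N → Fin 3,
            (if cnt 0 L = t.1.1 ∧ cnt 1 L = t.1.2.1 then g t * ∏ p, Amat α (J p) (L p) else 0) := by
    intro t
    rw [← backward_b2 α N J t.1.1 t.1.2.1, Finset.mul_sum]
    exact Finset.sum_congr rfl fun L _ => by rw [mul_ite, mul_zero]
  rw [Finset.sum_congr rfl fun t _ => hre t, Finset.sum_comm]
  refine Finset.sum_congr rfl fun L _ => ?_
  rw [Finset.sum_eq_single (cntT L)]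
  · rw [if_pos ⟨rfl, rfl⟩]
  · intro t _ hne
    rw [if_neg]
    rintro ⟨h0, h1⟩
    refine hne (Subtype.ext ?_)
    have h2 : t.1.2.2 = cnt 2 L := by
      have ha := t.2
      have hb := cnt_sum L
      omega
    exact Prod.ext h0.symm (Prod.ext h1.symm h2)
  · intro h
    exact absurd (Finset.mem_univ _) h

lemma cntT_surjective (N : ℕ) (t : Triple N) : ∃ L : Fin N → Fin 3, cntT L = t := by
  obtain ⟨⟨N0, N1, N2⟩, ht⟩ := t
  simp only at ht
  refine ⟨fun p => if (p : ℕ) < N0 then 0 else if (p : ℕ) < N0 + N1 then 1 else 2, ?_⟩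
  set L : Fin N → Fin 3 := fun p => if (p : ℕ) < N0 then 0 else if (p : ℕ) < N0 + N1 then 1 else 2
    with hL
  have hcard : ∀ a : ℕ, a ≤ N → (univ.filter fun p : Fin N => (p : ℕ) < a).card = a := by
    intro a ha
    have he : (univ.filter fun p : Fin N => (p : ℕ) < a)
        = Finset.attachFin (Finset.range a)
            (fun m hm => lt_of_lt_of_le (Finset.mem_range.1 hm) ha) := by
      ext p
      simp [Finset.mem_attachFin]
    rw [he, Finset.card_attachFin, Finset.card_range]
  have h0 : cnt 0 L = N0 := by
    have he : (univ.filter fun p : Fin N => L p = 0)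
        = univ.filter fun p : Fin N => (p : ℕ) < N0 := by
      ext p
      simp only [Finset.mem_filter, Finset.mem_univ, true_and, hL]
      constructor
      · intro h
        by_contra hn
        rw [if_neg hn] at h
        split_ifs at h <;> exact absurd h (by decide)
      · intro h
        rw [if_pos h]
    rw [cnt, he, hcard N0 (by omega)]
  have h2 : cnt 2 L = N2 := by
    have he : (univ.filter fun p : Fin N => L p = 2)
        = univ.filter fun p : Fin N => ¬ ((p : ℕ) < N0 + N1) := by
      ext p
      simp only [Finset.mem_filter, Finset.mem_univ, true_and, hL]
      constructor
      · intro h hn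
        by_cases h1 : (p : ℕ) < N0
        · rw [if_pos h1] at h; exact absurd h (by decide)
        · rw [if_neg h1, if_pos hn] at h; exact absurd h (by decide)
      · intro h
        rw [if_neg (by omega), if_neg h]
    have hsum := Finset.card_filter_add_card_filter_not
      (s := (univ : Finset (Fin N))) (p := fun p : Fin N => (p : ℕ) < N0 + N1)
    have hc2 := hcard (N0 + N1) (by omega)
    rw [cnt, he]
    simp only [Finset.card_univ, Fintype.card_fin] at hsum
    omega
  have h1 : cnt 1 L = N1 := by
    have := cnt_sum L
    omega
  exact Subtype.ext (Prod.ext h0 (Prod.ext h1 h2))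

/-- The full system `A_α^{⊗N} x = 0` has a nontrivial nonnegative solution if
and only if the reduced system `C_{α,N} y = 0` does. -/
theorem nns_iff_reduced_nns (α : ℝ) (N : ℕ) (hN : 1 ≤ N) :
    (∃ x : (Fin N → Fin 3) → ℝ,
      (∀ L, 0 ≤ x L) ∧ x ≠ 0 ∧
      ∀ J : Fin N → Fin 2,
        ∑ L : Fin N → Fin 3, (x L : ℂ) * ∏ p : Fin N, Amat α (J p) (L p) = 0) ↔
    (∃ y : Triple N → ℝ,
      (∀ t, 0 ≤ y t) ∧ y ≠ 0 ∧
      ∀ j : Fin (N + 1), ∑ t : Triple N, Cmat α N j t * (y t : ℂ) = 0) := by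
  set z := Complex.exp (α * Complex.I) with hzdef
  constructor
  · rintro ⟨x, hx0, hxne, hsys⟩
    set yhat : Triple N → ℝ := fun t => ∑ L ∈ univ.filter fun L => cntT L = t, x L with hyhat
    set y : Triple N → ℝ := fun t =>
      (t.1.1.factorial * t.1.2.1.factorial * t.1.2.2.factorial : ℝ) * yhat t with hy
    have hyhat0 : ∀ t, 0 ≤ yhat t := fun t => Finset.sum_nonneg fun L _ => hx0 L
    refine ⟨y, ?_, ?_, ?_⟩
    · intro t
      exact mul_nonneg (by positivity) (hyhat0 t)
    · obtain ⟨L0, hL0⟩ := Function.ne_iff.1 hxne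
      have hxL0 : 0 < x L0 := lt_of_le_of_ne (hx0 L0) (Ne.symm hL0)
      have hpos : 0 < yhat (cntT L0) := by
        apply Finset.sum_pos'
        · exact fun L _ => hx0 L
        · exact ⟨L0, Finset.mem_filter.2 ⟨Finset.mem_univ _, rfl⟩, hxL0⟩
      refine Function.ne_iff.2 ⟨cntT L0, ?_⟩
      have hfp : (0 : ℝ) < ((cntT L0).1.1.factorial * (cntT L0).1.2.1.factorial
          * (cntT L0).1.2.2.factorial : ℝ) := by positivity
      simpa [hy] using (mul_pos hfp hpos).ne'
    · intro j
      have hD : ∀ j' : ℕ,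
          ∑ t : Triple N, Dent z j' t.1.2.1 t.1.2.2 * ((yhat t : ℝ) : ℂ) = 0 := by
        intro j'
        calc ∑ t : Triple N, Dent z j' t.1.2.1 t.1.2.2 * ((yhat t : ℝ) : ℂ)
            = ∑ t : Triple N, ∑ L ∈ univ.filter fun L => cntT L = t,
                (x L : ℂ) * Dent z j' (cnt 1 L) (cnt 2 L) := by
              refine Finset.sum_congr rfl fun t _ => ?_
              rw [hyhat]
              push_cast
              rw [Finset.mul_sum]
              refine Finset.sum_congr rfl fun L hL => ?_
              have ht : cntT L = t := (Finset.mem_filter.1 hL).2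
              have h1 : cnt 1 L = t.1.2.1 := by rw [← ht]; rfl
              have h2 : cnt 2 L = t.1.2.2 := by rw [← ht]; rfl
              rw [h1, h2]
              ring
          _ = ∑ L : Fin N → Fin 3, (x L : ℂ) * Dent z j' (cnt 1 L) (cnt 2 L) :=
              Finset.sum_fiberwise _ _ _
          _ = 0 := forward_extract α N x hsys j'
      have hjN : (j : ℕ) ≤ N := by omega
      calc ∑ t : Triple N, Cmat α N j t * (y t : ℂ)
          = ∑ t : Triple N, ∑ k ∈ Finset.range (N - (j : ℕ) + 1),
              ((N - (j : ℕ)).choose k : ℂ) * (-z) ^ k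
                * ((((j : ℕ) + k).factorial * (N - ((j : ℕ) + k)).factorial : ℕ) : ℂ)
                * (Dent z ((j : ℕ) + k) t.1.2.1 t.1.2.2 * ((yhat t : ℝ) : ℂ)) := by
            refine Finset.sum_congr rfl fun t _ => ?_
            rw [cmat_eq, R2 z N (j : ℕ) t.1.1 t.1.2.1 t.1.2.2 t.2 hjN]
            have hyc : ((y t : ℝ) : ℂ)
                = ((t.1.1.factorial * t.1.2.1.factorial * t.1.2.2.factorial : ℕ) : ℂ)
                  * ((yhat t : ℝ) : ℂ) := by
              rw [hy]
              push_cast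
              ring
            rw [hyc, Finset.sum_mul]
            refine Finset.sum_congr rfl fun k hk => ?_
            have hk' : (j : ℕ) + k ≤ N := by
              have := Finset.mem_range.1 hk
              omega
            have hr1 := R1 z N ((j : ℕ) + k) t.1.1 t.1.2.1 t.1.2.2 t.2 hk'
            have hNsub : N - ((j : ℕ) + k) = N - (j : ℕ) - k := by omega
            calc ((N - (j : ℕ)).choose k : ℂ) * (-z) ^ k * Bent z N ((j : ℕ) + k) t.1.1 t.1.2.1
                  * (((t.1.1.factorial * t.1.2.1.factorial * t.1.2.2.factorial : ℕ) : ℂ)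
                    * ((yhat t : ℝ) : ℂ))
                = ((N - (j : ℕ)).choose k : ℂ) * (-z) ^ k
                  * (((t.1.1.factorial * t.1.2.1.factorial * t.1.2.2.factorial : ℕ) : ℂ)
                    * Bent z N ((j : ℕ) + k) t.1.1 t.1.2.1) * ((yhat t : ℝ) : ℂ) := by ring
              _ = ((N - (j : ℕ)).choose k : ℂ) * (-z) ^ k
                  * (((((j : ℕ) + k).factorial * (N - ((j : ℕ) + k)).factorial : ℕ) : ℂ)
                    * Dent z ((j : ℕ) + k) t.1.2.1 t.1.2.2) * ((yhat t : ℝ) : ℂ) := by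
                  rw [hr1]
              _ = _ := by ring
        _ = ∑ k ∈ Finset.range (N - (j : ℕ) + 1),
              ((N - (j : ℕ)).choose k : ℂ) * (-z) ^ k
                * ((((j : ℕ) + k).factorial * (N - ((j : ℕ) + k)).factorial : ℕ) : ℂ)
                * ∑ t : Triple N, Dent z ((j : ℕ) + k) t.1.2.1 t.1.2.2 * ((yhat t : ℝ) : ℂ) := by
            rw [Finset.sum_comm]
            exact Finset.sum_congr rfl fun k _ => by rw [Finset.mul_sum]
        _ = 0 := by
            apply Finset.sum_eq_zero
            intro k _
            rw [hD ((j : ℕ) + k), mul_zero]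
  · rintro ⟨y, hy0, hyne, hsys⟩
    refine ⟨fun L => y (cntT L), fun L => hy0 _, ?_, ?_⟩
    · obtain ⟨t0, ht0⟩ := Function.ne_iff.1 hyne
      obtain ⟨L0, hL0⟩ := cntT_surjective N t0
      refine Function.ne_iff.2 ⟨L0, ?_⟩
      simpa [hL0] using ht0
    · intro J
      set j := cntJ 1 J with hj
      have hjN : j ≤ N := cntJ_le J 1
      calc ∑ L : Fin N → Fin 3, ((y (cntT L) : ℝ) : ℂ) * ∏ p, Amat α (J p) (L p)
          = ∑ t : Triple N, ((y t : ℝ) : ℂ) * Bent z N j t.1.1 t.1.2.1 :=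
            backward_b3 α N J (fun t => ((y t : ℝ) : ℂ))
        _ = ∑ t : Triple N, ∑ k ∈ Finset.range (N - j + 1),
              ((N - j).choose k : ℂ) * z ^ k
                * (Cent z N (j + k) t.1.1 t.1.2.1 * ((y t : ℝ) : ℂ)) := by
            refine Finset.sum_congr rfl fun t _ => ?_
            rw [R2' z N j t.1.1 t.1.2.1 t.1.2.2 t.2 hjN, Finset.mul_sum]
            exact Finset.sum_congr rfl fun k _ => by ring
        _ = ∑ k ∈ Finset.range (N - j + 1), ((N - j).choose k : ℂ) * z ^ k
              * ∑ t : Triple N, Cent z N (j + k) t.1.1 t.1.2.1 * ((y t : ℝ) : ℂ) := by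
            rw [Finset.sum_comm]
            exact Finset.sum_congr rfl fun k _ => by rw [Finset.mul_sum]
        _ = 0 := by
            apply Finset.sum_eq_zero
            intro k hk
            have hk' : j + k < N + 1 := by
              have := Finset.mem_range.1 hk
              omega
            have hz0 := hsys ⟨j + k, hk'⟩
            have hinner : ∑ t : Triple N, Cent z N (j + k) t.1.1 t.1.2.1 * ((y t : ℝ) : ℂ) = 0 := by
              rw [← hz0]
              refine Finset.sum_congr rfl fun t _ => ?_
              rw [cmat_eq]
            rw [hinner, mul_zero]
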